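/- Consider an HMM on a compact X ⊂ ℝ with transition density f and likelihood g satisfying the uniform mixing bounds: there exist 0 < C̲ < C̄ < ∞ such that C̲ ≤ g(x', y_p) f(x, x') ≤ C̄ for all p ≥ 1 and (x, x') ∈ X², and similarly for the initial density. Then there exist ρ ∈ (0,1) and C < ∞ such that for every p ≥ 1 the time-0 marginal smoothers satisfy ‖π_{p,0} − π_{p−1,0}‖_tv ≤ C ρ^{p−1}, where π_{p,0} is the conditional law of X₀ given observations y_{0:p}. -/

import Mathlib

open MeasureTheory Set Function

/-- Total variation distance between two measures. -/
noncomputable def tvDist {X : Type*} [MeasurableSpace X] (μ ν : Measure X) : ℝ :=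
  ⨆ A : Set X, |(μ A).toReal - (ν A).toReal|

/-- Backward functional of the HMM: `back X f g m k x` integrates the product of
transitions and likelihoods over the states at times `k+1, …, k+m`, started from state `x`
at time `k`. -/
noncomputable def back (X : Set ℝ) (f : ℝ → ℝ → ℝ) (g : ℕ → ℝ → ℝ) : ℕ → ℕ → ℝ → ℝ
  | 0, _, _ => 1
  | m + 1, k, x => ∫ z in X, f x z * g (k + 1) z * back X f g m (k + 1) z

/-- Density (w.r.t. Lebesgue on `X`) of the time-0 marginal smoother `π_{p,0}`,
i.e. the law of `X₀` given the observations `y_{0:p}` (the observations are absorbed in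
`g`, with `g p x = g(x, y_p)`). -/
noncomputable def smootherDen (X : Set ℝ) (f0 : ℝ → ℝ) (f : ℝ → ℝ → ℝ) (g : ℕ → ℝ → ℝ)
    (p : ℕ) (x : ℝ) : ℝ :=
  f0 x * g 0 x * back X f g p 0 x / ∫ y in X, f0 y * g 0 y * back X f g p 0 y

/-- The time-0 marginal smoother `π_{p,0}` as a measure on `X`. -/
noncomputable def smoother (X : Set ℝ) (f0 : ℝ → ℝ) (f : ℝ → ℝ → ℝ) (g : ℕ → ℝ → ℝ)
    (p : ℕ) : Measure ℝ :=
  (volume.restrict X).withDensity (fun x => ENNReal.ofReal (smootherDen X f0 f g p x))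

namespace S4

variable {a b : ℝ} {f0 : ℝ → ℝ} {f : ℝ → ℝ → ℝ} {g : ℕ → ℝ → ℝ} {Cl Cu : ℝ}

lemma intOn (hab : a < b) {h : ℝ → ℝ} (hm : Measurable h) {M : ℝ}
    (hb : ∀ x ∈ Icc a b, |h x| ≤ M) : IntegrableOn h (Icc a b) := by
  refine Integrable.mono' (integrable_const M) hm.aestronglyMeasurable ?_
  filter_upwards [ae_restrict_mem measurableSet_Icc] with x hx
  simpa using hb x hx

lemma intOn2 (hab : a < b) {h : ℝ × ℝ → ℝ} (hm : Measurable h) {M : ℝ}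
    (hb : ∀ x ∈ Icc a b, ∀ z ∈ Icc a b, |h (x, z)| ≤ M) :
    Integrable h ((volume.restrict (Icc a b)).prod (volume.restrict (Icc a b))) := by
  rw [Measure.prod_restrict]
  haveI : IsFiniteMeasure ((volume.prod volume).restrict (Icc a b ×ˢ Icc a b)) := by
    constructor
    rw [Measure.restrict_apply_univ, Measure.prod_prod]
    exact ENNReal.mul_lt_top (by simp) (by simp)
  refine Integrable.mono' (integrable_const M) hm.aestronglyMeasurable ?_
  filter_upwards [ae_restrict_mem (measurableSet_Icc.prod measurableSet_Icc)] with x hx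
  simpa using hb x.1 hx.1 x.2 hx.2

lemma meas_back (hf : Measurable (uncurry f)) (hg : ∀ p, Measurable (g p)) :
    ∀ m k, Measurable (back (Icc a b) f g m k) := by
  intro m
  induction m with
  | zero => intro k; simpa [back] using measurable_const
  | succ m ih =>
      intro k
      have hjm : StronglyMeasurable fun q : ℝ × ℝ =>
          f q.1 q.2 * g (k + 1) q.2 * back (Icc a b) f g m (k + 1) q.2 :=
        ((hf.mul ((hg (k+1)).comp measurable_snd)).mul
          ((ih (k+1)).comp measurable_snd)).stronglyMeasurable
      exact hjm.integral_prod_right'.measurable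

lemma volIcc (hab : a < b) : (volume (Icc a b)).toReal = b - a := by
  rw [Real.volume_Icc, ENNReal.toReal_ofReal (by linarith)]

lemma back_bounds (hab : a < b) (hf : Measurable (uncurry f)) (hg : ∀ p, Measurable (g p))
    (hCl : 0 < Cl) (hClu : Cl < Cu)
    (hA1 : ∀ p : ℕ, 1 ≤ p → ∀ x ∈ Set.Icc a b, ∀ x' ∈ Set.Icc a b,
      Cl ≤ g p x' * f x x' ∧ g p x' * f x x' ≤ Cu) :
    ∀ m k, ∀ x ∈ Icc a b,
      (Cl * (b - a)) ^ m ≤ back (Icc a b) f g m k x ∧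
      back (Icc a b) f g m k x ≤ (Cu * (b - a)) ^ m := by
  have hCu : 0 < Cu := hCl.trans hClu
  have hL : 0 < b - a := by linarith
  intro m
  induction m with
  | zero => intro k x hx; simp [back]
  | succ m ih =>
      intro k x hx
      have hblo : 0 < (Cl * (b - a)) ^ m := by positivity
      have hint : IntegrableOn
          (fun z => f x z * g (k + 1) z * back (Icc a b) f g m (k + 1) z) (Icc a b) := by
        refine intOn hab ?_ (M := Cu * (Cu * (b - a)) ^ m) ?_
        · exact ((hf.comp (measurable_prodMk_left)).mul (hg (k+1))).mul (meas_back hf hg m (k+1))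
        · intro z hz
          have h1 := hA1 (k+1) (by omega) x hx z hz
          have h2 := ih (k+1) z hz
          have hfg : f x z * g (k+1) z = g (k+1) z * f x z := mul_comm _ _
          rw [abs_le]
          constructor
          · nlinarith [h1.1, h1.2, h2.1, h2.2]
          · nlinarith [h1.1, h1.2, h2.1, h2.2]
      have hlow : ∀ z ∈ Icc a b, Cl * (Cl * (b - a)) ^ m ≤
          f x z * g (k + 1) z * back (Icc a b) f g m (k + 1) z := by
        intro z hz
        have h1 := hA1 (k+1) (by omega) x hx z hz
        have h2 := ih (k+1) z hz
        nlinarith [h1.1, h1.2, h2.1, h2.2]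
      have hhigh : ∀ z ∈ Icc a b,
          f x z * g (k + 1) z * back (Icc a b) f g m (k + 1) z ≤ Cu * (Cu * (b - a)) ^ m := by
        intro z hz
        have h1 := hA1 (k+1) (by omega) x hx z hz
        have h2 := ih (k+1) z hz
        nlinarith [h1.1, h1.2, h2.1, h2.2]
      constructor
      · have := setIntegral_mono_on (integrable_const _) hint measurableSet_Icc hlow
        rw [setIntegral_const, measureReal_def, volIcc hab, smul_eq_mul] at this
        calc (Cl * (b-a))^(m+1) = (b - a) * (Cl * (Cl * (b-a))^m) := by ring
          _ ≤ _ := this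
          _ = back (Icc a b) f g (m+1) k x := rfl
      · have := setIntegral_mono_on hint (integrable_const _) measurableSet_Icc hhigh
        rw [setIntegral_const, measureReal_def, volIcc hab, smul_eq_mul] at this
        calc back (Icc a b) f g (m+1) k x = _ := rfl
          _ ≤ (b - a) * (Cu * (Cu * (b-a))^m) := this
          _ = (Cu * (b-a))^(m+1) := by ring


noncomputable def Afn (a b : ℝ) (f0 : ℝ → ℝ) (f : ℝ → ℝ → ℝ) (g : ℕ → ℝ → ℝ) : ℕ → ℝ → ℝ
  | 0 => fun x => f0 x * g 0 x
  | q + 1 => fun x => ∫ z in Icc a b, Afn a b f0 f g q z * (f z x * g (q + 1) x)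

variable {a b : ℝ} {f0 : ℝ → ℝ} {f : ℝ → ℝ → ℝ} {g : ℕ → ℝ → ℝ} {Cl Cu : ℝ}

lemma meas_A (hf0 : Measurable f0) (hf : Measurable (uncurry f)) (hg : ∀ p, Measurable (g p)) :
    ∀ q, Measurable (Afn a b f0 f g q) := by
  intro q
  induction q with
  | zero => exact hf0.mul (hg 0)
  | succ q ih =>
      have hjm : StronglyMeasurable fun q' : ℝ × ℝ =>
          Afn a b f0 f g q q'.2 * (f q'.2 q'.1 * g (q + 1) q'.1) :=
        ((ih.comp measurable_snd).mul
          ((hf.comp measurable_swap).mul ((hg (q+1)).comp measurable_fst))).stronglyMeasurable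
      exact hjm.integral_prod_right'.measurable

lemma A_bounds (hab : a < b) (hf0 : Measurable f0) (hf : Measurable (uncurry f))
    (hg : ∀ p, Measurable (g p)) (hCl : 0 < Cl) (hClu : Cl < Cu)
    (hA1_0 : ∀ x ∈ Set.Icc a b, Cl ≤ g 0 x * f0 x ∧ g 0 x * f0 x ≤ Cu)
    (hA1 : ∀ p : ℕ, 1 ≤ p → ∀ x ∈ Set.Icc a b, ∀ x' ∈ Set.Icc a b,
      Cl ≤ g p x' * f x x' ∧ g p x' * f x x' ≤ Cu) :
    ∀ q, ∀ x ∈ Icc a b,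
      Cl * (Cl * (b - a)) ^ q ≤ Afn a b f0 f g q x ∧
      Afn a b f0 f g q x ≤ Cu * (Cu * (b - a)) ^ q := by
  have hCu : 0 < Cu := hCl.trans hClu
  have hL : 0 < b - a := by linarith
  intro q
  induction q with
  | zero =>
      intro x hx
      have := hA1_0 x hx
      constructor
      · simpa [Afn, mul_comm] using this.1
      · simpa [Afn, mul_comm] using this.2
  | succ q ih =>
      intro x hx
      have hint : IntegrableOn
          (fun z => Afn a b f0 f g q z * (f z x * g (q + 1) x)) (Icc a b) := by
        refine intOn hab ?_ (M := Cu * (Cu * (b - a)) ^ q * Cu) ?_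
        · exact (meas_A hf0 hf hg q).mul
            (((hf.comp (measurable_id.prodMk measurable_const))).mul measurable_const)
        · intro z hz
          have h1 := hA1 (q+1) (by omega) z hz x hx
          have h2 := ih z hz
          rw [show f z x * g (q+1) x = g (q+1) x * f z x from mul_comm _ _, abs_le]
          have hp1 : (0:ℝ) < Cl * (Cl*(b-a))^q * Cl := by positivity
          have hp2 : (0:ℝ) < Cu * (Cu*(b-a))^q * Cu := by positivity
          have hml : Cl * (Cl*(b-a))^q * Cl ≤ Afn a b f0 f g q z * (g (q+1) x * f z x) :=
            mul_le_mul h2.1 h1.1 hCl.le (le_trans (by positivity) h2.1)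
          have hmu : Afn a b f0 f g q z * (g (q+1) x * f z x) ≤ Cu * (Cu*(b-a))^q * Cu :=
            mul_le_mul h2.2 h1.2 (by linarith [h1.1]) (by positivity)
          constructor <;> linarith
      have hlow : ∀ z ∈ Icc a b, Cl * (Cl * (b - a)) ^ q * Cl ≤
          Afn a b f0 f g q z * (f z x * g (q + 1) x) := by
        intro z hz
        have h1 := hA1 (q+1) (by omega) z hz x hx
        have h2 := ih z hz
        rw [show f z x * g (q+1) x = g (q+1) x * f z x from mul_comm _ _]
        have hp1 : (0:ℝ) < Cl * (Cl*(b-a))^q * Cl := by positivity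
        have hp2 : (0:ℝ) < Cu * (Cu*(b-a))^q * Cu := by positivity
        have hml : Cl * (Cl*(b-a))^q * Cl ≤ Afn a b f0 f g q z * (g (q+1) x * f z x) :=
          mul_le_mul h2.1 h1.1 hCl.le (le_trans (by positivity) h2.1)
        have hmu : Afn a b f0 f g q z * (g (q+1) x * f z x) ≤ Cu * (Cu*(b-a))^q * Cu :=
          mul_le_mul h2.2 h1.2 (by linarith [h1.1]) (by positivity)
        linarith
      have hhigh : ∀ z ∈ Icc a b,
          Afn a b f0 f g q z * (f z x * g (q + 1) x) ≤ Cu * (Cu * (b - a)) ^ q * Cu := by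
        intro z hz
        have h1 := hA1 (q+1) (by omega) z hz x hx
        have h2 := ih z hz
        rw [show f z x * g (q+1) x = g (q+1) x * f z x from mul_comm _ _]
        have hp1 : (0:ℝ) < Cl * (Cl*(b-a))^q * Cl := by positivity
        have hp2 : (0:ℝ) < Cu * (Cu*(b-a))^q * Cu := by positivity
        have hml : Cl * (Cl*(b-a))^q * Cl ≤ Afn a b f0 f g q z * (g (q+1) x * f z x) :=
          mul_le_mul h2.1 h1.1 hCl.le (le_trans (by positivity) h2.1)
        have hmu : Afn a b f0 f g q z * (g (q+1) x * f z x) ≤ Cu * (Cu*(b-a))^q * Cu :=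
          mul_le_mul h2.2 h1.2 (by linarith [h1.1]) (by positivity)
        linarith
      constructor
      · have := setIntegral_mono_on (integrable_const _) hint measurableSet_Icc hlow
        rw [setIntegral_const, measureReal_def, volIcc hab, smul_eq_mul] at this
        calc Cl * (Cl * (b-a))^(q+1) = (b - a) * (Cl * (Cl * (b-a))^q * Cl) := by ring
          _ ≤ _ := this
          _ = Afn a b f0 f g (q+1) x := rfl
      · have := setIntegral_mono_on hint (integrable_const _) measurableSet_Icc hhigh
        rw [setIntegral_const, measureReal_def, volIcc hab, smul_eq_mul] at this
        calc Afn a b f0 f g (q+1) x = _ := rfl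
          _ ≤ (b - a) * (Cu * (Cu * (b-a))^q * Cu) := this
          _ = Cu * (Cu * (b-a))^(q+1) := by ring


noncomputable def J (a b : ℝ) (f0 : ℝ → ℝ) (f : ℝ → ℝ → ℝ) (g : ℕ → ℝ → ℝ) (q m : ℕ) : ℝ :=
  ∫ x in Icc a b, Afn a b f0 f g q x * back (Icc a b) f g m q x

section hyp

variable (hab : a < b) (hf0 : Measurable f0) (hf : Measurable (uncurry f))
  (hg : ∀ p, Measurable (g p)) (hCl : 0 < Cl) (hClu : Cl < Cu)
  (hA1_0 : ∀ x ∈ Set.Icc a b, Cl ≤ g 0 x * f0 x ∧ g 0 x * f0 x ≤ Cu)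
  (hA1 : ∀ p : ℕ, 1 ≤ p → ∀ x ∈ Set.Icc a b, ∀ x' ∈ Set.Icc a b,
      Cl ≤ g p x' * f x x' ∧ g p x' * f x x' ≤ Cu)

include hab hf0 hf hg hCl hClu hA1_0 hA1

lemma prod_int (q m k : ℕ) :
    Integrable (fun p : ℝ × ℝ =>
      Afn a b f0 f g q p.1 * (f p.1 p.2 * g (k + 1) p.2 * back (Icc a b) f g m (k + 1) p.2))
      ((volume.restrict (Icc a b)).prod (volume.restrict (Icc a b))) := by
  have hCu : 0 < Cu := hCl.trans hClu
  have hL : 0 < b - a := by linarith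
  refine intOn2 hab ?_ (M := Cu * (Cu * (b - a)) ^ q * (Cu * (Cu * (b - a)) ^ m)) ?_
  · exact ((meas_A hf0 hf hg q).comp measurable_fst).mul
      ((hf.mul ((hg (k+1)).comp measurable_snd)).mul
        ((meas_back hf hg m (k+1)).comp measurable_snd))
  · intro x hx z hz
    have h1 := hA1 (k+1) (by omega) x hx z hz
    have h2 := A_bounds hab hf0 hf hg hCl hClu hA1_0 hA1 q x hx
    have h3 := back_bounds hab hf hg hCl hClu hA1 m (k+1) z hz
    have e1 : Afn a b f0 f g q x * (f x z * g (k+1) z * back (Icc a b) f g m (k+1) z)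
        = (Afn a b f0 f g q x * (g (k+1) z * f x z)) * back (Icc a b) f g m (k+1) z := by ring
    have hA0 : (0:ℝ) ≤ Afn a b f0 f g q x := le_trans (by positivity) h2.1
    have hb0 : (0:ℝ) ≤ back (Icc a b) f g m (k+1) z := le_trans (by positivity) h3.1
    have hm1 : Afn a b f0 f g q x * (g (k+1) z * f x z) ≤ Cu * (Cu * (b - a)) ^ q * Cu :=
      mul_le_mul h2.2 h1.2 (le_trans hCl.le h1.1) (by positivity)
    have hm2 : (Afn a b f0 f g q x * (g (k+1) z * f x z)) * back (Icc a b) f g m (k+1) z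
        ≤ (Cu * (Cu * (b - a)) ^ q * Cu) * (Cu * (b - a)) ^ m :=
      mul_le_mul hm1 h3.2 hb0 (by positivity)
    rw [e1, abs_le]
    refine ⟨?_, ?_⟩
    · have h4 : (0:ℝ) ≤ (Afn a b f0 f g q x * (g (k+1) z * f x z))
          * back (Icc a b) f g m (k+1) z :=
        mul_nonneg (mul_nonneg hA0 (le_trans hCl.le h1.1)) hb0
      have h5 : (0:ℝ) ≤ Cu * (Cu * (b - a)) ^ q * (Cu * (Cu * (b - a)) ^ m) := by positivity
      linarith
    · calc _ ≤ (Cu * (Cu * (b - a)) ^ q * Cu) * (Cu * (b - a)) ^ m := hm2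
        _ = Cu * (Cu * (b - a)) ^ q * (Cu * (Cu * (b - a)) ^ m) := by ring

lemma Jstep (q m : ℕ) : J a b f0 f g q (m + 1) = J a b f0 f g (q + 1) m := by
  have h1 : J a b f0 f g q (m+1) = ∫ x in Icc a b, ∫ z in Icc a b,
      Afn a b f0 f g q x * (f x z * g (q+1) z * back (Icc a b) f g m (q+1) z) := by
    refine integral_congr_ae (.of_forall fun x => ?_)
    show Afn a b f0 f g q x * back (Icc a b) f g (m+1) q x = _
    rw [show back (Icc a b) f g (m+1) q x
      = ∫ z in Icc a b, f x z * g (q+1) z * back (Icc a b) f g m (q+1) z from rfl]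
    exact (integral_const_mul _ _).symm
  have h2 := integral_integral_swap
    (f := fun x z => Afn a b f0 f g q x *
      (f x z * g (q+1) z * back (Icc a b) f g m (q+1) z))
    (prod_int hab hf0 hf hg hCl hClu hA1_0 hA1 q m q)
  have h3 : ∀ z : ℝ, (∫ x in Icc a b, Afn a b f0 f g q x *
      (f x z * g (q+1) z * back (Icc a b) f g m (q+1) z))
      = Afn a b f0 f g (q+1) z * back (Icc a b) f g m (q+1) z := by
    intro z
    calc (∫ x in Icc a b, Afn a b f0 f g q x *
          (f x z * g (q+1) z * back (Icc a b) f g m (q+1) z))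
        = ∫ x in Icc a b, (Afn a b f0 f g q x * (f x z * g (q+1) z))
            * back (Icc a b) f g m (q+1) z :=
          integral_congr_ae (.of_forall fun x => by ring)
      _ = (∫ x in Icc a b, Afn a b f0 f g q x * (f x z * g (q+1) z))
            * back (Icc a b) f g m (q+1) z := integral_mul_const _ _
      _ = Afn a b f0 f g (q+1) z * back (Icc a b) f g m (q+1) z := rfl
  rw [h1, h2]
  refine integral_congr_ae (.of_forall fun z => ?_)
  exact h3 z

lemma Jshift (q m : ℕ) : J a b f0 f g q m = J a b f0 f g 0 (q + m) := by
  induction q generalizing m with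
  | zero => rw [Nat.zero_add]
  | succ q ih =>
      have := Jstep hab hf0 hf hg hCl hClu hA1_0 hA1 q m
      rw [← this, ih (m+1)]
      congr 1
      omega

lemma Jpos (q m : ℕ) : Cl * (Cl * (b-a)) ^ q * (Cl * (b-a)) ^ m * (b - a) ≤ J a b f0 f g q m := by
  have hCu : 0 < Cu := hCl.trans hClu
  have hL : 0 < b - a := by linarith
  have hint : IntegrableOn (fun x => Afn a b f0 f g q x * back (Icc a b) f g m q x) (Icc a b) := by
    refine intOn hab ?_ (M := Cu * (Cu * (b-a)) ^ q * (Cu * (b-a)) ^ m) ?_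
    · exact (meas_A hf0 hf hg q).mul (meas_back hf hg m q)
    · intro x hx
      have h2 := A_bounds hab hf0 hf hg hCl hClu hA1_0 hA1 q x hx
      have h3 := back_bounds hab hf hg hCl hClu hA1 m q x hx
      have hA0 : (0:ℝ) ≤ Afn a b f0 f g q x := le_trans (by positivity) h2.1
      have hb0 : (0:ℝ) ≤ back (Icc a b) f g m q x := le_trans (by positivity) h3.1
      rw [abs_le]
      constructor
      · have := mul_nonneg hA0 hb0
        have h5 : (0:ℝ) ≤ Cu * (Cu * (b-a)) ^ q * (Cu * (b-a)) ^ m := by positivity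
        linarith
      · exact mul_le_mul h2.2 h3.2 hb0 (by positivity)
  have hlow : ∀ x ∈ Icc a b, Cl * (Cl * (b-a)) ^ q * (Cl * (b-a)) ^ m
      ≤ Afn a b f0 f g q x * back (Icc a b) f g m q x := by
    intro x hx
    have h2 := A_bounds hab hf0 hf hg hCl hClu hA1_0 hA1 q x hx
    have h3 := back_bounds hab hf hg hCl hClu hA1 m q x hx
    calc Cl * (Cl * (b-a)) ^ q * (Cl * (b-a)) ^ m
        ≤ Afn a b f0 f g q x * (Cl * (b-a)) ^ m := by
          have : (0:ℝ) ≤ (Cl * (b-a)) ^ m := by positivity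
          exact mul_le_mul_of_nonneg_right h2.1 this
      _ ≤ Afn a b f0 f g q x * back (Icc a b) f g m q x := by
          have hA0 : (0:ℝ) ≤ Afn a b f0 f g q x := le_trans (by positivity) h2.1
          exact mul_le_mul_of_nonneg_left h3.1 hA0
  have := setIntegral_mono_on (integrable_const _) hint measurableSet_Icc hlow
  rw [setIntegral_const, measureReal_def, volIcc hab, smul_eq_mul] at this
  calc Cl * (Cl * (b-a)) ^ q * (Cl * (b-a)) ^ m * (b - a)
      = (b-a) * (Cl * (Cl * (b-a)) ^ q * (Cl * (b-a)) ^ m) := by ring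
    _ ≤ J a b f0 f g q m := this


lemma AB_int (q m k : ℕ) :
    IntegrableOn (fun x => Afn a b f0 f g q x * back (Icc a b) f g m k x) (Icc a b) := by
  have hCu : 0 < Cu := hCl.trans hClu
  have hL : 0 < b - a := by linarith
  refine intOn hab ?_ (M := Cu * (Cu * (b-a)) ^ q * (Cu * (b-a)) ^ m) ?_
  · exact (meas_A hf0 hf hg q).mul (meas_back hf hg m k)
  · intro x hx
    have h2 := A_bounds hab hf0 hf hg hCl hClu hA1_0 hA1 q x hx
    have h3 := back_bounds hab hf hg hCl hClu hA1 m k x hx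
    have hA0 : (0:ℝ) ≤ Afn a b f0 f g q x := le_trans (by positivity) h2.1
    have hb0 : (0:ℝ) ≤ back (Icc a b) f g m k x := le_trans (by positivity) h3.1
    rw [abs_le]
    constructor
    · have := mul_nonneg hA0 hb0
      have h5 : (0:ℝ) ≤ Cu * (Cu * (b-a)) ^ q * (Cu * (b-a)) ^ m := by positivity
      linarith
    · exact mul_le_mul h2.2 h3.2 hb0 (by positivity)

lemma J0pos (n : ℕ) : 0 < J a b f0 f g 0 n := by
  have hL : 0 < b - a := by linarith
  refine lt_of_lt_of_le ?_ (Jpos hab hf0 hf hg hCl hClu hA1_0 hA1 0 n)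
  positivity

omit hab hf0 hf hg hCl hClu hA1_0 hA1 in
lemma Jq_eq (q : ℕ) : J a b f0 f g q 0 = ∫ x in Icc a b, Afn a b f0 f g q x := by
  refine integral_congr_ae (.of_forall fun x => ?_)
  show Afn a b f0 f g q x * back (Icc a b) f g 0 q x = _
  show Afn a b f0 f g q x * 1 = _
  rw [mul_one]

lemma Jqpos (q : ℕ) : 0 < J a b f0 f g q 0 := by
  rw [Jshift hab hf0 hf hg hCl hClu hA1_0 hA1 q 0]
  exact J0pos hab hf0 hf hg hCl hClu hA1_0 hA1 (q + 0)

lemma nden_int (q m n : ℕ) :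
    IntegrableOn (fun x => Afn a b f0 f g q x * back (Icc a b) f g m q x / J a b f0 f g 0 n)
      (Icc a b) :=
  (AB_int hab hf0 hf hg hCl hClu hA1_0 hA1 q m q).div_const _

lemma nden_nonneg (q m n : ℕ) : ∀ x ∈ Icc a b,
    0 ≤ Afn a b f0 f g q x * back (Icc a b) f g m q x / J a b f0 f g 0 n := by
  intro x hx
  have hL : 0 < b - a := by linarith
  have h2 := A_bounds hab hf0 hf hg hCl hClu hA1_0 hA1 q x hx
  have h3 := back_bounds hab hf hg hCl hClu hA1 m q x hx
  have hA0 : (0:ℝ) ≤ Afn a b f0 f g q x := le_trans (by positivity) h2.1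
  have hb0 : (0:ℝ) ≤ back (Icc a b) f g m q x := le_trans (by positivity) h3.1
  have := (J0pos hab hf0 hf hg hCl hClu hA1_0 hA1 n).le
  positivity

lemma nden_setint (q m : ℕ) :
    ∫ x in Icc a b,
      Afn a b f0 f g q x * back (Icc a b) f g m q x / J a b f0 f g 0 (q + m) = 1 := by
  rw [integral_div]
  show J a b f0 f g q m / J a b f0 f g 0 (q+m) = 1
  rw [Jshift hab hf0 hf hg hCl hClu hA1_0 hA1 q m]
  exact div_self (J0pos hab hf0 hf hg hCl hClu hA1_0 hA1 (q+m)).ne'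


omit hf0 hA1_0 in
lemma fgB_int (m k : ℕ) {x : ℝ} (hx : x ∈ Icc a b) :
    IntegrableOn (fun z => f x z * g (k + 1) z * back (Icc a b) f g m (k + 1) z) (Icc a b) := by
  have hCu : 0 < Cu := hCl.trans hClu
  have hL : 0 < b - a := by linarith
  refine intOn hab ?_ (M := Cu * (Cu * (b - a)) ^ m) ?_
  · exact ((hf.comp measurable_prodMk_left).mul (hg (k+1))).mul (meas_back hf hg m (k+1))
  · intro z hz
    have h1 := hA1 (k+1) (by omega) x hx z hz
    have h3 := back_bounds hab hf hg hCl hClu hA1 m (k+1) z hz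
    have hb0 : (0:ℝ) ≤ back (Icc a b) f g m (k+1) z := le_trans (by positivity) h3.1
    have e1 : f x z * g (k+1) z * back (Icc a b) f g m (k+1) z
        = (g (k+1) z * f x z) * back (Icc a b) f g m (k+1) z := by ring
    rw [e1, abs_le]
    have hm1 : (g (k+1) z * f x z) * back (Icc a b) f g m (k+1) z ≤ Cu * (Cu * (b - a)) ^ m :=
      mul_le_mul h1.2 h3.2 hb0 hCu.le
    have hm0 : (0:ℝ) ≤ (g (k+1) z * f x z) * back (Icc a b) f g m (k+1) z :=
      mul_nonneg (le_trans hCl.le h1.1) hb0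
    have : (0:ℝ) ≤ Cu * (Cu * (b - a)) ^ m := by positivity
    exact ⟨by linarith, hm1⟩

lemma AK_int (q k : ℕ) {z : ℝ} (hz : z ∈ Icc a b) :
    IntegrableOn (fun w => Afn a b f0 f g q w * (f w z * g (k + 1) z)) (Icc a b) := by
  have hCu : 0 < Cu := hCl.trans hClu
  have hL : 0 < b - a := by linarith
  refine intOn hab ?_ (M := Cu * (Cu * (b - a)) ^ q * Cu) ?_
  · exact (meas_A hf0 hf hg q).mul
      ((hf.comp (measurable_id.prodMk measurable_const)).mul measurable_const)
  · intro w hw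
    have h1 := hA1 (k+1) (by omega) w hw z hz
    have h2 := A_bounds hab hf0 hf hg hCl hClu hA1_0 hA1 q w hw
    have hA0 : (0:ℝ) ≤ Afn a b f0 f g q w := le_trans (by positivity) h2.1
    rw [show f w z * g (k+1) z = g (k+1) z * f w z from mul_comm _ _, abs_le]
    have hm1 : Afn a b f0 f g q w * (g (k+1) z * f w z) ≤ Cu * (Cu * (b - a)) ^ q * Cu :=
      mul_le_mul h2.2 h1.2 (le_trans hCl.le h1.1) (by positivity)
    have hm0 : (0:ℝ) ≤ Afn a b f0 f g q w * (g (k+1) z * f w z) :=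
      mul_nonneg hA0 (le_trans hCl.le h1.1)
    have : (0:ℝ) ≤ Cu * (Cu * (b - a)) ^ q * Cu := by positivity
    exact ⟨by linarith, hm1⟩

/-- `∫ x, Bk q z x = 1` for `z ∈ X`. -/
lemma Bk_int_one (q : ℕ) {z : ℝ} (hz : z ∈ Icc a b) :
    ∫ x in Icc a b,
      Afn a b f0 f g q x * (f x z * g (q + 1) z) / Afn a b f0 f g (q + 1) z = 1 := by
  have hL : 0 < b - a := by linarith
  have hA1z := A_bounds hab hf0 hf hg hCl hClu hA1_0 hA1 (q+1) z hz
  have hA1zpos : 0 < Afn a b f0 f g (q+1) z := lt_of_lt_of_le (by positivity) hA1z.1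
  rw [integral_div]
  have : (∫ x in Icc a b, Afn a b f0 f g q x * (f x z * g (q + 1) z))
      = Afn a b f0 f g (q+1) z := rfl
  rw [this]
  exact div_self hA1zpos.ne'

lemma al_int_one (q : ℕ) :
    ∫ x in Icc a b, Afn a b f0 f g q x / J a b f0 f g q 0 = 1 := by
  rw [integral_div, ← Jq_eq]
  exact div_self (Jqpos hab hf0 hf hg hCl hClu hA1_0 hA1 q).ne'

/-- The backward kernel dominates `(Cl/Cu)` times the normalized forward density. -/
lemma Bk_dom (q : ℕ) {z x : ℝ} (hz : z ∈ Icc a b) (hx : x ∈ Icc a b) :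
    Cl / Cu * (Afn a b f0 f g q x / J a b f0 f g q 0)
      ≤ Afn a b f0 f g q x * (f x z * g (q + 1) z) / Afn a b f0 f g (q + 1) z := by
  have hCu : 0 < Cu := hCl.trans hClu
  have hL : 0 < b - a := by linarith
  have hJq := Jqpos hab hf0 hf hg hCl hClu hA1_0 hA1 q
  have hAx := A_bounds hab hf0 hf hg hCl hClu hA1_0 hA1 q x hx
  have hAx0 : (0:ℝ) ≤ Afn a b f0 f g q x := le_trans (by positivity) hAx.1
  have h1 := hA1 (q+1) (by omega) x hx z hz
  have hA1z := A_bounds hab hf0 hf hg hCl hClu hA1_0 hA1 (q+1) z hz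
  have hA1zpos : 0 < Afn a b f0 f g (q+1) z := lt_of_lt_of_le (by positivity) hA1z.1
  -- A_{q+1}(z) ≤ Cu * J q 0
  have hup : Afn a b f0 f g (q+1) z ≤ Cu * J a b f0 f g q 0 := by
    have hint1 := AK_int hab hf0 hf hg hCl hClu hA1_0 hA1 q q hz
    have hint2 : IntegrableOn (fun w => Afn a b f0 f g q w * Cu) (Icc a b) :=
      (intOn hab (meas_A hf0 hf hg q) (M := Cu * (Cu * (b-a)) ^ q) (fun w hw => by
        have h2 := A_bounds hab hf0 hf hg hCl hClu hA1_0 hA1 q w hw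
        have hA0 : (0:ℝ) ≤ Afn a b f0 f g q w := le_trans (by positivity) h2.1
        rw [abs_of_nonneg hA0]; exact h2.2)).mul_const _
    have hpt : ∀ w ∈ Icc a b, Afn a b f0 f g q w * (f w z * g (q+1) z)
        ≤ Afn a b f0 f g q w * Cu := by
      intro w hw
      have h1' := hA1 (q+1) (by omega) w hw z hz
      have h2 := A_bounds hab hf0 hf hg hCl hClu hA1_0 hA1 q w hw
      have hA0 : (0:ℝ) ≤ Afn a b f0 f g q w := le_trans (by positivity) h2.1
      rw [show f w z * g (q+1) z = g (q+1) z * f w z from mul_comm _ _]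
      exact mul_le_mul_of_nonneg_left h1'.2 hA0
    have := setIntegral_mono_on hint1 hint2 measurableSet_Icc hpt
    calc Afn a b f0 f g (q+1) z
        = ∫ w in Icc a b, Afn a b f0 f g q w * (f w z * g (q+1) z) := rfl
      _ ≤ ∫ w in Icc a b, Afn a b f0 f g q w * Cu := this
      _ = (∫ w in Icc a b, Afn a b f0 f g q w) * Cu := integral_mul_const _ _
      _ = Cu * J a b f0 f g q 0 := by rw [← Jq_eq]; ring
  have e1 : Cl / Cu * (Afn a b f0 f g q x / J a b f0 f g q 0)
      = (Afn a b f0 f g q x * Cl) / (Cu * J a b f0 f g q 0) := by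
    field_simp
  rw [e1, show f x z * g (q+1) z = g (q+1) z * f x z from mul_comm _ _]
  exact div_le_div₀ (mul_nonneg hAx0 (le_trans hCl.le h1.1))
    (mul_le_mul_of_nonneg_left h1.1 hAx0) hA1zpos hup


lemma A_int (q : ℕ) : IntegrableOn (Afn a b f0 f g q) (Icc a b) := by
  have hCu : 0 < Cu := hCl.trans hClu
  have hL : 0 < b - a := by linarith
  refine intOn hab (meas_A hf0 hf hg q) (M := Cu * (Cu * (b-a)) ^ q) ?_
  intro w hw
  have h2 := A_bounds hab hf0 hf hg hCl hClu hA1_0 hA1 q w hw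
  have hA0 : (0:ℝ) ≤ Afn a b f0 f g q w := le_trans (by positivity) h2.1
  rw [abs_of_nonneg hA0]; exact h2.2

lemma dstep (q m : ℕ) :
    (∫ x in Icc a b,
      |Afn a b f0 f g q x * back (Icc a b) f g (m+2) q x / J a b f0 f g 0 (q+m+2)
        - Afn a b f0 f g q x * back (Icc a b) f g (m+1) q x / J a b f0 f g 0 (q+m+1)|)
    ≤ (1 - Cl/Cu) *
      ∫ z in Icc a b,
      |Afn a b f0 f g (q+1) z * back (Icc a b) f g (m+1) (q+1) z / J a b f0 f g 0 (q+m+2)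
        - Afn a b f0 f g (q+1) z * back (Icc a b) f g m (q+1) z / J a b f0 f g 0 (q+m+1)| := by
  have hCu : 0 < Cu := hCl.trans hClu
  have hL : 0 < b - a := by linarith
  have hZ1 : 0 < J a b f0 f g 0 (q+m+2) := J0pos hab hf0 hf hg hCl hClu hA1_0 hA1 _
  have hZ2 : 0 < J a b f0 f g 0 (q+m+1) := J0pos hab hf0 hf hg hCl hClu hA1_0 hA1 _
  have hJq : 0 < J a b f0 f g q 0 := Jqpos hab hf0 hf hg hCl hClu hA1_0 hA1 q
  have hZL1 := Jpos hab hf0 hf hg hCl hClu hA1_0 hA1 0 (q+m+2)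
  have hZL2 := Jpos hab hf0 hf hg hCl hClu hA1_0 hA1 0 (q+m+1)
  have hJqL := Jpos hab hf0 hf hg hCl hClu hA1_0 hA1 q 0
  -- the "next-step" signed difference
  set dd : ℝ → ℝ := fun z =>
    Afn a b f0 f g (q+1) z * back (Icc a b) f g (m+1) (q+1) z / J a b f0 f g 0 (q+m+2)
      - Afn a b f0 f g (q+1) z * back (Icc a b) f g m (q+1) z / J a b f0 f g 0 (q+m+1)
    with hdd_def
  -- the kernel minus the dominating component
  set G : ℝ × ℝ → ℝ := fun p =>
    (Afn a b f0 f g q p.1 * (f p.1 p.2 * g (q+1) p.2) / Afn a b f0 f g (q+1) p.2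
      - Cl/Cu * (Afn a b f0 f g q p.1 / J a b f0 f g q 0)) * dd p.2 with hG_def
  have hddint : IntegrableOn dd (Icc a b) :=
    (nden_int hab hf0 hf hg hCl hClu hA1_0 hA1 (q+1) (m+1) (q+m+2)).sub
      (nden_int hab hf0 hf hg hCl hClu hA1_0 hA1 (q+1) m (q+m+1))
  have hddzero : ∫ z in Icc a b, dd z = 0 := by
    rw [hdd_def]
    rw [integral_sub (nden_int hab hf0 hf hg hCl hClu hA1_0 hA1 (q+1) (m+1) (q+m+2))
      (nden_int hab hf0 hf hg hCl hClu hA1_0 hA1 (q+1) m (q+m+1))]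
    have h1 := nden_setint hab hf0 hf hg hCl hClu hA1_0 hA1 (q+1) (m+1)
    rw [show q+1+(m+1) = q+m+2 from by omega] at h1
    have h2 := nden_setint hab hf0 hf hg hCl hClu hA1_0 hA1 (q+1) m
    rw [show q+1+m = q+m+1 from by omega] at h2
    rw [h1, h2]; ring
  -- bounds
  have hddbd : ∀ z ∈ Icc a b, |dd z| ≤
      Cu * (Cu*(b-a))^(q+1) * (Cu*(b-a))^(m+1)
        / (Cl * (Cl*(b-a))^0 * (Cl*(b-a))^(q+m+2) * (b-a))
      + Cu * (Cu*(b-a))^(q+1) * (Cu*(b-a))^m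
        / (Cl * (Cl*(b-a))^0 * (Cl*(b-a))^(q+m+1) * (b-a)) := by
    intro z hz
    have hA1z := A_bounds hab hf0 hf hg hCl hClu hA1_0 hA1 (q+1) z hz
    have hA1z0 : (0:ℝ) ≤ Afn a b f0 f g (q+1) z := le_trans (by positivity) hA1z.1
    have hB1 := back_bounds hab hf hg hCl hClu hA1 (m+1) (q+1) z hz
    have hB2 := back_bounds hab hf hg hCl hClu hA1 m (q+1) z hz
    have hB10 : (0:ℝ) ≤ back (Icc a b) f g (m+1) (q+1) z := le_trans (by positivity) hB1.1
    have hB20 : (0:ℝ) ≤ back (Icc a b) f g m (q+1) z := le_trans (by positivity) hB2.1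
    have hn1 : Afn a b f0 f g (q+1) z * back (Icc a b) f g (m+1) (q+1) z / J a b f0 f g 0 (q+m+2)
        ≤ Cu * (Cu*(b-a))^(q+1) * (Cu*(b-a))^(m+1)
          / (Cl * (Cl*(b-a))^0 * (Cl*(b-a))^(q+m+2) * (b-a)) :=
      div_le_div₀ (by positivity) (mul_le_mul hA1z.2 hB1.2 hB10 (by positivity))
        (by positivity) hZL1
    have hn2 : Afn a b f0 f g (q+1) z * back (Icc a b) f g m (q+1) z / J a b f0 f g 0 (q+m+1)
        ≤ Cu * (Cu*(b-a))^(q+1) * (Cu*(b-a))^m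
          / (Cl * (Cl*(b-a))^0 * (Cl*(b-a))^(q+m+1) * (b-a)) :=
      div_le_div₀ (by positivity) (mul_le_mul hA1z.2 hB2.2 hB20 (by positivity))
        (by positivity) hZL2
    have hp1 : (0:ℝ) ≤ Afn a b f0 f g (q+1) z * back (Icc a b) f g (m+1) (q+1) z
        / J a b f0 f g 0 (q+m+2) := by positivity
    have hp2 : (0:ℝ) ≤ Afn a b f0 f g (q+1) z * back (Icc a b) f g m (q+1) z
        / J a b f0 f g 0 (q+m+1) := by positivity
    calc |dd z| ≤ |Afn a b f0 f g (q+1) z * back (Icc a b) f g (m+1) (q+1) z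
          / J a b f0 f g 0 (q+m+2)|
        + |Afn a b f0 f g (q+1) z * back (Icc a b) f g m (q+1) z / J a b f0 f g 0 (q+m+1)| :=
          abs_sub _ _
      _ ≤ _ := by rw [abs_of_nonneg hp1, abs_of_nonneg hp2]; exact add_le_add hn1 hn2
  -- kernel bounds
  have hBkbd : ∀ x ∈ Icc a b, ∀ z ∈ Icc a b,
      0 ≤ Afn a b f0 f g q x * (f x z * g (q+1) z) / Afn a b f0 f g (q+1) z ∧
      Afn a b f0 f g q x * (f x z * g (q+1) z) / Afn a b f0 f g (q+1) z
        ≤ Cu * (Cu*(b-a))^q * Cu / (Cl * (Cl*(b-a))^(q+1)) := by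
    intro x hx z hz
    have h1 := hA1 (q+1) (by omega) x hx z hz
    have hAx := A_bounds hab hf0 hf hg hCl hClu hA1_0 hA1 q x hx
    have hAx0 : (0:ℝ) ≤ Afn a b f0 f g q x := le_trans (by positivity) hAx.1
    have hA1z := A_bounds hab hf0 hf hg hCl hClu hA1_0 hA1 (q+1) z hz
    have hA1zpos : 0 < Afn a b f0 f g (q+1) z := lt_of_lt_of_le (by positivity) hA1z.1
    constructor
    · refine div_nonneg (mul_nonneg hAx0 ?_) hA1zpos.le
      rw [show f x z * g (q+1) z = g (q+1) z * f x z from mul_comm _ _]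
      exact le_trans hCl.le h1.1
    · rw [show f x z * g (q+1) z = g (q+1) z * f x z from mul_comm _ _]
      exact div_le_div₀ (by positivity)
        (mul_le_mul hAx.2 h1.2 (le_trans hCl.le h1.1) (by positivity)) (by positivity) hA1z.1
  have halbd : ∀ x ∈ Icc a b,
      0 ≤ Afn a b f0 f g q x / J a b f0 f g q 0 ∧
      Afn a b f0 f g q x / J a b f0 f g q 0
        ≤ Cu * (Cu*(b-a))^q / (Cl * (Cl*(b-a))^q * (Cl*(b-a))^0 * (b-a)) := by
    intro x hx
    have hAx := A_bounds hab hf0 hf hg hCl hClu hA1_0 hA1 q x hx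
    have hAx0 : (0:ℝ) ≤ Afn a b f0 f g q x := le_trans (by positivity) hAx.1
    exact ⟨div_nonneg hAx0 hJq.le,
      div_le_div₀ (by positivity) hAx.2 (by positivity) hJqL⟩
  -- measurability of G
  have hddmeas : Measurable dd := by
    rw [hdd_def]
    exact (((meas_A hf0 hf hg (q+1)).mul (meas_back hf hg (m+1) (q+1))).div_const _).sub
      (((meas_A hf0 hf hg (q+1)).mul (meas_back hf hg m (q+1))).div_const _)
  have hGmeas : Measurable G := by
    rw [hG_def]
    refine Measurable.mul ?_ (hddmeas.comp measurable_snd)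
    refine Measurable.sub ?_ ?_
    · exact (((meas_A hf0 hf hg q).comp measurable_fst).mul
        (hf.mul ((hg (q+1)).comp measurable_snd))).div
        ((meas_A hf0 hf hg (q+1)).comp measurable_snd)
    · exact (measurable_const.mul
        (((meas_A hf0 hf hg q).comp measurable_fst).div_const _))
  -- integrability of G on the product
  have hGint : Integrable G
      ((volume.restrict (Icc a b)).prod (volume.restrict (Icc a b))) := by
    refine intOn2 hab hGmeas
      (M := (Cu * (Cu*(b-a))^q * Cu / (Cl * (Cl*(b-a))^(q+1))
          + Cl/Cu * (Cu * (Cu*(b-a))^q / (Cl * (Cl*(b-a))^q * (Cl*(b-a))^0 * (b-a)))) *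
        (Cu * (Cu*(b-a))^(q+1) * (Cu*(b-a))^(m+1)
            / (Cl * (Cl*(b-a))^0 * (Cl*(b-a))^(q+m+2) * (b-a))
          + Cu * (Cu*(b-a))^(q+1) * (Cu*(b-a))^m
            / (Cl * (Cl*(b-a))^0 * (Cl*(b-a))^(q+m+1) * (b-a)))) ?_
    intro x hx z hz
    have h1 := hBkbd x hx z hz
    have h2 := halbd x hx
    have h3 := hddbd z hz
    rw [hG_def]
    simp only [abs_mul]
    refine mul_le_mul ?_ h3 (abs_nonneg _) ?_
    · calc |Afn a b f0 f g q x * (f x z * g (q+1) z) / Afn a b f0 f g (q+1) z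
            - Cl/Cu * (Afn a b f0 f g q x / J a b f0 f g q 0)|
          ≤ |Afn a b f0 f g q x * (f x z * g (q+1) z) / Afn a b f0 f g (q+1) z|
            + |Cl/Cu * (Afn a b f0 f g q x / J a b f0 f g q 0)| := abs_sub _ _
        _ ≤ _ := by
            rw [abs_of_nonneg h1.1, abs_mul, abs_of_nonneg h2.1,
              abs_of_nonneg (by positivity : (0:ℝ) ≤ Cl/Cu)]
            refine add_le_add h1.2 (mul_le_mul_of_nonneg_left h2.2 (by positivity))
    · have := abs_nonneg (Afn a b f0 f g q x * (f x z * g (q+1) z) / Afn a b f0 f g (q+1) z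
        - Cl/Cu * (Afn a b f0 f g q x / J a b f0 f g q 0))
      have h4 : (0:ℝ) ≤ Cu * (Cu*(b-a))^q * Cu / (Cl * (Cl*(b-a))^(q+1)) := by positivity
      have h5 : (0:ℝ) ≤ Cl/Cu * (Cu * (Cu*(b-a))^q
        / (Cl * (Cl*(b-a))^q * (Cl*(b-a))^0 * (b-a))) := by positivity
      linarith
  -- key identity: the signed difference is an integral of G
  have hkey : ∀ x ∈ Icc a b,
      Afn a b f0 f g q x * back (Icc a b) f g (m+2) q x / J a b f0 f g 0 (q+m+2)
        - Afn a b f0 f g q x * back (Icc a b) f g (m+1) q x / J a b f0 f g 0 (q+m+1)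
      = ∫ z in Icc a b, G (x, z) := by
    intro x hx
    have hP1int : IntegrableOn (fun z => Afn a b f0 f g q x *
        (f x z * g (q+1) z * back (Icc a b) f g (m+1) (q+1) z) / J a b f0 f g 0 (q+m+2))
        (Icc a b) :=
      ((fgB_int hab hf hg hCl hClu hA1 (m+1) q hx).const_mul _).div_const _
    have hP2int : IntegrableOn (fun z => Afn a b f0 f g q x *
        (f x z * g (q+1) z * back (Icc a b) f g m (q+1) z) / J a b f0 f g 0 (q+m+1))
        (Icc a b) :=
      ((fgB_int hab hf hg hCl hClu hA1 m q hx).const_mul _).div_const _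
    have hcongr : ∀ᵐ z ∂(volume.restrict (Icc a b)),
        Afn a b f0 f g q x * (f x z * g (q+1) z) / Afn a b f0 f g (q+1) z * dd z
        = Afn a b f0 f g q x *
            (f x z * g (q+1) z * back (Icc a b) f g (m+1) (q+1) z) / J a b f0 f g 0 (q+m+2)
          - Afn a b f0 f g q x *
            (f x z * g (q+1) z * back (Icc a b) f g m (q+1) z) / J a b f0 f g 0 (q+m+1) := by
      filter_upwards [ae_restrict_mem measurableSet_Icc] with z hz
      have hA1z := A_bounds hab hf0 hf hg hCl hClu hA1_0 hA1 (q+1) z hz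
      have hA1zpos : 0 < Afn a b f0 f g (q+1) z := lt_of_lt_of_le (by positivity) hA1z.1
      rw [hdd_def]
      field_simp
    have hBkd_int : IntegrableOn (fun z =>
        Afn a b f0 f g q x * (f x z * g (q+1) z) / Afn a b f0 f g (q+1) z * dd z)
        (Icc a b) := (hP1int.sub hP2int).congr (hcongr.mono fun z hz => hz.symm)
    have step1 : ∫ z in Icc a b, G (x, z)
        = (∫ z in Icc a b,
            Afn a b f0 f g q x * (f x z * g (q+1) z) / Afn a b f0 f g (q+1) z * dd z)
          - ∫ z in Icc a b, Cl/Cu * (Afn a b f0 f g q x / J a b f0 f g q 0) * dd z := by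
      rw [← integral_sub hBkd_int (hddint.const_mul _)]
      refine integral_congr_ae (.of_forall fun z => ?_)
      rw [hG_def]; ring
    have step2 : ∫ z in Icc a b, Cl/Cu * (Afn a b f0 f g q x / J a b f0 f g q 0) * dd z
        = 0 := by
      rw [integral_const_mul, hddzero, mul_zero]
    have step3 : ∫ z in Icc a b,
        Afn a b f0 f g q x * (f x z * g (q+1) z) / Afn a b f0 f g (q+1) z * dd z
        = Afn a b f0 f g q x * back (Icc a b) f g (m+2) q x / J a b f0 f g 0 (q+m+2)
          - Afn a b f0 f g q x * back (Icc a b) f g (m+1) q x / J a b f0 f g 0 (q+m+1) := by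
      rw [integral_congr_ae hcongr, integral_sub hP1int hP2int]
      have e1 : ∫ z in Icc a b, Afn a b f0 f g q x *
          (f x z * g (q+1) z * back (Icc a b) f g (m+1) (q+1) z) / J a b f0 f g 0 (q+m+2)
          = Afn a b f0 f g q x * back (Icc a b) f g (m+2) q x / J a b f0 f g 0 (q+m+2) := by
        rw [integral_div, integral_const_mul]
        rfl
      have e2 : ∫ z in Icc a b, Afn a b f0 f g q x *
          (f x z * g (q+1) z * back (Icc a b) f g m (q+1) z) / J a b f0 f g 0 (q+m+1)
          = Afn a b f0 f g q x * back (Icc a b) f g (m+1) q x / J a b f0 f g 0 (q+m+1) := by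
        rw [integral_div, integral_const_mul]
        rfl
      rw [e1, e2]
    rw [step1, step2, step3, sub_zero]
  -- pull everything together
  have int1 : IntegrableOn (fun x =>
      |Afn a b f0 f g q x * back (Icc a b) f g (m+2) q x / J a b f0 f g 0 (q+m+2)
        - Afn a b f0 f g q x * back (Icc a b) f g (m+1) q x / J a b f0 f g 0 (q+m+1)|)
      (Icc a b) :=
    ((nden_int hab hf0 hf hg hCl hClu hA1_0 hA1 q (m+2) (q+m+2)).sub
      (nden_int hab hf0 hf hg hCl hClu hA1_0 hA1 q (m+1) (q+m+1))).abs
  have int2 : IntegrableOn (fun x => ∫ z in Icc a b, ‖G (x, z)‖) (Icc a b) :=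
    hGint.integral_norm_prod_left
  calc (∫ x in Icc a b,
      |Afn a b f0 f g q x * back (Icc a b) f g (m+2) q x / J a b f0 f g 0 (q+m+2)
        - Afn a b f0 f g q x * back (Icc a b) f g (m+1) q x / J a b f0 f g 0 (q+m+1)|)
      ≤ ∫ x in Icc a b, ∫ z in Icc a b, ‖G (x, z)‖ := by
        refine setIntegral_mono_on int1 int2 measurableSet_Icc fun x hx => ?_
        rw [hkey x hx, ← Real.norm_eq_abs]
        exact norm_integral_le_integral_norm _
    _ = ∫ z in Icc a b, ∫ x in Icc a b, ‖G (x, z)‖ :=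
        integral_integral_swap (f := fun x z => ‖G (x, z)‖) hGint.norm
    _ = ∫ z in Icc a b, (1 - Cl/Cu) * |dd z| := by
        refine integral_congr_ae ?_
        filter_upwards [ae_restrict_mem measurableSet_Icc] with z hz
        have hBint : IntegrableOn (fun x =>
            Afn a b f0 f g q x * (f x z * g (q+1) z) / Afn a b f0 f g (q+1) z) (Icc a b) :=
          (AK_int hab hf0 hf hg hCl hClu hA1_0 hA1 q q hz).div_const _
        have halint : IntegrableOn (fun x =>
            Cl/Cu * (Afn a b f0 f g q x / J a b f0 f g q 0)) (Icc a b) :=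
          ((A_int hab hf0 hf hg hCl hClu hA1_0 hA1 q).div_const _).const_mul _
        have e1 : ∫ x in Icc a b, ‖G (x, z)‖
            = ∫ x in Icc a b,
              (Afn a b f0 f g q x * (f x z * g (q+1) z) / Afn a b f0 f g (q+1) z
                - Cl/Cu * (Afn a b f0 f g q x / J a b f0 f g q 0)) * |dd z| := by
          refine setIntegral_congr_ae measurableSet_Icc (.of_forall fun x hx => ?_)
          rw [hG_def]
          have hnn : 0 ≤ Afn a b f0 f g q x * (f x z * g (q+1) z) / Afn a b f0 f g (q+1) z
              - Cl/Cu * (Afn a b f0 f g q x / J a b f0 f g q 0) :=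
            sub_nonneg.mpr (Bk_dom hab hf0 hf hg hCl hClu hA1_0 hA1 q hz hx)
          rw [Real.norm_eq_abs, abs_mul, abs_of_nonneg hnn]
        rw [e1, integral_mul_const, integral_sub hBint halint,
          Bk_int_one hab hf0 hf hg hCl hClu hA1_0 hA1 q hz, integral_const_mul,
          al_int_one hab hf0 hf hg hCl hClu hA1_0 hA1 q, mul_one]
    _ = (1 - Cl/Cu) * ∫ z in Icc a b, |dd z| := integral_const_mul _ _


lemma dbase (q : ℕ) :
    (∫ x in Icc a b,
      |Afn a b f0 f g q x * back (Icc a b) f g 1 q x / J a b f0 f g 0 (q+1)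
        - Afn a b f0 f g q x * back (Icc a b) f g 0 q x / J a b f0 f g 0 q|) ≤ 2 := by
  have i1 := nden_int hab hf0 hf hg hCl hClu hA1_0 hA1 q 1 (q+1)
  have i2 := nden_int hab hf0 hf hg hCl hClu hA1_0 hA1 q 0 q
  have i12 : IntegrableOn (fun x =>
      Afn a b f0 f g q x * back (Icc a b) f g 1 q x / J a b f0 f g 0 (q+1)
        + Afn a b f0 f g q x * back (Icc a b) f g 0 q x / J a b f0 f g 0 q) (Icc a b) :=
    i1.add i2
  have hmono := setIntegral_mono_on (i1.sub i2).abs i12 measurableSet_Icc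
    (fun x hx => by
      have n1 := nden_nonneg hab hf0 hf hg hCl hClu hA1_0 hA1 q 1 (q+1) x hx
      have n2 := nden_nonneg hab hf0 hf hg hCl hClu hA1_0 hA1 q 0 q x hx
      calc |Afn a b f0 f g q x * back (Icc a b) f g 1 q x / J a b f0 f g 0 (q+1)
            - Afn a b f0 f g q x * back (Icc a b) f g 0 q x / J a b f0 f g 0 q|
          ≤ |Afn a b f0 f g q x * back (Icc a b) f g 1 q x / J a b f0 f g 0 (q+1)|
            + |Afn a b f0 f g q x * back (Icc a b) f g 0 q x / J a b f0 f g 0 q| := abs_sub _ _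
        _ = _ := by rw [abs_of_nonneg n1, abs_of_nonneg n2])
  refine le_trans hmono ?_
  rw [integral_add i1 i2]
  have h1 := nden_setint hab hf0 hf hg hCl hClu hA1_0 hA1 q 1
  have h2 := nden_setint hab hf0 hf hg hCl hClu hA1_0 hA1 q 0
  rw [Nat.add_zero] at h2
  rw [h1, h2]
  norm_num

lemma dgeo (m : ℕ) : ∀ q : ℕ,
    (∫ x in Icc a b,
      |Afn a b f0 f g q x * back (Icc a b) f g (m+1) q x / J a b f0 f g 0 (q+m+1)
        - Afn a b f0 f g q x * back (Icc a b) f g m q x / J a b f0 f g 0 (q+m)|)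
    ≤ 2 * (1 - Cl/Cu) ^ m := by
  have hCu : 0 < Cu := hCl.trans hClu
  have hρ0 : 0 ≤ 1 - Cl/Cu := by
    have : Cl / Cu ≤ 1 := (div_le_one hCu).mpr hClu.le
    linarith
  induction m with
  | zero =>
      intro q
      simpa using dbase hab hf0 hf hg hCl hClu hA1_0 hA1 q
  | succ m ih =>
      intro q
      rw [show q+(m+1)+1 = q+m+2 from by omega, show q+(m+1) = q+m+1 from by omega,
        show m+1+1 = m+2 from by omega]
      calc (∫ x in Icc a b,
          |Afn a b f0 f g q x * back (Icc a b) f g (m+2) q x / J a b f0 f g 0 (q+m+2)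
            - Afn a b f0 f g q x * back (Icc a b) f g (m+1) q x / J a b f0 f g 0 (q+m+1)|)
          ≤ (1 - Cl/Cu) * ∫ z in Icc a b,
            |Afn a b f0 f g (q+1) z * back (Icc a b) f g (m+1) (q+1) z / J a b f0 f g 0 (q+m+2)
              - Afn a b f0 f g (q+1) z * back (Icc a b) f g m (q+1) z
                / J a b f0 f g 0 (q+m+1)| :=
            dstep hab hf0 hf hg hCl hClu hA1_0 hA1 q m
        _ ≤ (1 - Cl/Cu) * (2 * (1 - Cl/Cu) ^ m) := by
            refine mul_le_mul_of_nonneg_left ?_ hρ0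
            have := ih (q+1)
            rw [show q+1+m+1 = q+m+2 from by omega, show q+1+m = q+m+1 from by omega] at this
            exact this
        _ = 2 * (1 - Cl/Cu) ^ (m+1) := by ring


omit hab hf0 hf hg hCl hClu hA1_0 hA1 in
lemma tv_le_L1 {h1 h2 : ℝ → ℝ}
    (hi1 : IntegrableOn h1 (Icc a b)) (hi2 : IntegrableOn h2 (Icc a b))
    (hp1 : ∀ x ∈ Icc a b, 0 ≤ h1 x) (hp2 : ∀ x ∈ Icc a b, 0 ≤ h2 x) :
    tvDist ((volume.restrict (Icc a b)).withDensity fun x => ENNReal.ofReal (h1 x))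
      ((volume.restrict (Icc a b)).withDensity fun x => ENNReal.ofReal (h2 x))
    ≤ ∫ x in Icc a b, |h1 x - h2 x| := by
  have key : ∀ (h : ℝ → ℝ), IntegrableOn h (Icc a b) → (∀ x ∈ Icc a b, 0 ≤ h x) →
      ∀ B : Set ℝ, MeasurableSet B →
      ((volume.restrict (Icc a b)).withDensity fun x => ENNReal.ofReal (h x)) B
        = ENNReal.ofReal (∫ x in B ∩ Icc a b, h x) := by
    intro h hi hp B hB
    rw [withDensity_apply _ hB, Measure.restrict_restrict hB,
      ← ofReal_integral_eq_lintegral_ofReal (hi.mono_set inter_subset_right) ?_]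
    filter_upwards [ae_restrict_mem (hB.inter measurableSet_Icc)] with x hx using hp x hx.2
  have hδ0 : 0 ≤ ∫ x in Icc a b, |h1 x - h2 x| :=
    integral_nonneg fun x => abs_nonneg _
  have half : ∀ (u v : ℝ → ℝ), IntegrableOn u (Icc a b) → IntegrableOn v (Icc a b) →
      (∀ x ∈ Icc a b, 0 ≤ u x) → (∀ x ∈ Icc a b, 0 ≤ v x) → ∀ A : Set ℝ,
      (((volume.restrict (Icc a b)).withDensity fun x => ENNReal.ofReal (u x)) A).toReal
        ≤ (((volume.restrict (Icc a b)).withDensity fun x => ENNReal.ofReal (v x)) A).toReal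
          + ∫ x in Icc a b, |u x - v x| := by
    intro u v hiu hiv hpu hpv A
    set ν1 := (volume.restrict (Icc a b)).withDensity fun x => ENNReal.ofReal (u x) with hν1
    set ν2 := (volume.restrict (Icc a b)).withDensity fun x => ENNReal.ofReal (v x) with hν2
    set B := toMeasurable ν2 A with hBdef
    have hB : MeasurableSet B := measurableSet_toMeasurable _ _
    have hAB : A ⊆ B := subset_toMeasurable _ _
    have hν1B := key u hiu hpu B hB
    have hν2B := key v hiv hpv B hB
    have e2 : ν2 B = ν2 A := measure_toMeasurable A
    have h1top : ν1 B ≠ ⊤ := by rw [hν1B]; exact ENNReal.ofReal_ne_top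
    have mono1 : (ν1 A).toReal ≤ (ν1 B).toReal :=
      ENNReal.toReal_mono h1top (measure_mono hAB)
    have hiu' : IntegrableOn u (B ∩ Icc a b) := hiu.mono_set inter_subset_right
    have hiv' : IntegrableOn v (B ∩ Icc a b) := hiv.mono_set inter_subset_right
    have hsubint : IntegrableOn (fun x => u x - v x) (Icc a b) := hiu.sub hiv
    have habsint : IntegrableOn (fun x => |u x - v x|) (Icc a b) := hsubint.abs
    have diff : (∫ x in B ∩ Icc a b, u x)
        ≤ (∫ x in B ∩ Icc a b, v x) + ∫ x in Icc a b, |u x - v x| := by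
      have hsub : (∫ x in B ∩ Icc a b, (u x - v x)) ≤ ∫ x in Icc a b, |u x - v x| := by
        calc (∫ x in B ∩ Icc a b, (u x - v x))
            ≤ ∫ x in B ∩ Icc a b, |u x - v x| :=
              setIntegral_mono_on (hiu'.sub hiv')
                (habsint.mono_set inter_subset_right)
                (hB.inter measurableSet_Icc) (fun x _ => le_abs_self _)
          _ ≤ ∫ x in Icc a b, |u x - v x| :=
              setIntegral_mono_set habsint
                (Filter.Eventually.of_forall fun x => abs_nonneg _)
                (HasSubset.Subset.eventuallyLE inter_subset_right)
      have := integral_sub hiu' hiv'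
      rw [this] at hsub
      linarith
    have toReal1 : (ν1 B).toReal = ∫ x in B ∩ Icc a b, u x := by
      rw [hν1B, ENNReal.toReal_ofReal
        (setIntegral_nonneg (hB.inter measurableSet_Icc) fun x hx => hpu x hx.2)]
    have toReal2 : (ν2 B).toReal = ∫ x in B ∩ Icc a b, v x := by
      rw [hν2B, ENNReal.toReal_ofReal
        (setIntegral_nonneg (hB.inter measurableSet_Icc) fun x hx => hpv x hx.2)]
    calc (ν1 A).toReal ≤ (ν1 B).toReal := mono1
      _ = ∫ x in B ∩ Icc a b, u x := toReal1
      _ ≤ (∫ x in B ∩ Icc a b, v x) + ∫ x in Icc a b, |u x - v x| := diff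
      _ = (ν2 B).toReal + ∫ x in Icc a b, |u x - v x| := by rw [toReal2]
      _ = (ν2 A).toReal + ∫ x in Icc a b, |u x - v x| := by rw [e2]
  rw [tvDist]
  refine ciSup_le fun A => ?_
  have hs1 := half h1 h2 hi1 hi2 hp1 hp2 A
  have hs2 := half h2 h1 hi2 hi1 hp2 hp1 A
  have habs : (∫ x in Icc a b, |h2 x - h1 x|) = ∫ x in Icc a b, |h1 x - h2 x| :=
    integral_congr_ae (.of_forall fun x => abs_sub_comm _ _)
  rw [habs] at hs2
  rw [abs_le]
  constructor <;> linarith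

end hyp
end S4

/-- Under the uniform mixing bounds (A1), consecutive time-0 marginal smoothers are
geometrically close in total variation. -/
theorem stmt4 (a b : ℝ) (hab : a < b) (f0 : ℝ → ℝ) (f : ℝ → ℝ → ℝ) (g : ℕ → ℝ → ℝ)
    (hf0 : Measurable f0) (hf : Measurable (Function.uncurry f))
    (hg : ∀ p, Measurable (g p))
    (Cl Cu : ℝ) (hCl : 0 < Cl) (hClu : Cl < Cu)
    (hA1_0 : ∀ x ∈ Set.Icc a b, Cl ≤ g 0 x * f0 x ∧ g 0 x * f0 x ≤ Cu)
    (hA1 : ∀ p : ℕ, 1 ≤ p → ∀ x ∈ Set.Icc a b, ∀ x' ∈ Set.Icc a b,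
      Cl ≤ g p x' * f x x' ∧ g p x' * f x x' ≤ Cu) :
    ∃ (C : ℝ) (ρ : ℝ), 0 < C ∧ ρ ∈ Set.Ioo (0:ℝ) 1 ∧
      ∀ p : ℕ, 1 ≤ p →
        tvDist (smoother (Set.Icc a b) f0 f g p) (smoother (Set.Icc a b) f0 f g (p - 1))
          ≤ C * ρ ^ (p - 1) := by
  have hCu : 0 < Cu := hCl.trans hClu
  refine ⟨2, 1 - Cl/Cu, by norm_num, ⟨?_, ?_⟩, ?_⟩
  · have h1 : Cl / Cu < 1 := (div_lt_one hCu).mpr hClu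
    simpa using h1
  · have h2 : 0 < Cl / Cu := div_pos hCl hCu
    simpa using h2
  intro p hp
  obtain ⟨m, rfl⟩ : ∃ m, p = m + 1 := ⟨p - 1, by omega⟩
  rw [show m + 1 - 1 = m from rfl]
  have key := S4.dgeo hab hf0 hf hg hCl hClu hA1_0 hA1 m 0
  rw [show 0+m+1 = m+1 from by omega, show 0+m = m from by omega] at key
  show tvDist
    ((volume.restrict (Set.Icc a b)).withDensity
      fun x => ENNReal.ofReal (smootherDen (Set.Icc a b) f0 f g (m+1) x))
    ((volume.restrict (Set.Icc a b)).withDensity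
      fun x => ENNReal.ofReal (smootherDen (Set.Icc a b) f0 f g m x)) ≤ 2 * (1 - Cl/Cu) ^ m
  refine le_trans (S4.tv_le_L1 ?_ ?_ ?_ ?_) ?_
  · exact S4.nden_int hab hf0 hf hg hCl hClu hA1_0 hA1 0 (m+1) (m+1)
  · exact S4.nden_int hab hf0 hf hg hCl hClu hA1_0 hA1 0 m m
  · exact S4.nden_nonneg hab hf0 hf hg hCl hClu hA1_0 hA1 0 (m+1) (m+1)
  · exact S4.nden_nonneg hab hf0 hf hg hCl hClu hA1_0 hA1 0 m m
  · exact key
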